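/- With E_si(γ) = log₂ Σ_v Q(v) (Σ_u Q(u|v)^{1/(1+γ)})^{1+γ}, F_si(γ) = log₂ Σ_v Q(v) (Σ_u Q(u|v)^{1/(1+γ)})^γ, and G_si(γ) = log₂ Σ_v Q(v) (Σ_u Q(u|v)^{1/(1+γ)}), for every γ ∈ [0,1] we have E_si(γ) ≥ F_si(γ) + G_si(γ). -/
import Mathlib

open Finset

private theorem cheb_aux {V : Type} [Fintype V] (w f g : V → ℝ)
    (hw : ∀ v, 0 ≤ w v) (hw1 : ∑ v, w v = 1)
    (h : ∀ v v', 0 ≤ (f v - f v') * (g v - g v')) :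
    (∑ v, w v * f v) * (∑ v, w v * g v) ≤ ∑ v, w v * (f v * g v) := by
  have key : 0 ≤ ∑ v, ∑ v', w v * w v' * ((f v - f v') * (g v - g v')) :=
    Finset.sum_nonneg fun v _ => Finset.sum_nonneg fun v' _ =>
      mul_nonneg (mul_nonneg (hw v) (hw v')) (h v v')
  have expand : ∑ v, ∑ v', w v * w v' * ((f v - f v') * (g v - g v'))
      = 2 * (∑ v, w v * (f v * g v)) - 2 * ((∑ v, w v * f v) * (∑ v, w v * g v)) := by
    have : ∀ v : V, ∑ v', w v * w v' * ((f v - f v') * (g v - g v'))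
        = w v * (f v * g v) * (∑ v', w v') - w v * f v * (∑ v', w v' * g v')
          - w v * g v * (∑ v', w v' * f v') + w v * (∑ v', w v' * (f v' * g v')) := by
      intro v
      simp only [Finset.mul_sum, ← Finset.sum_sub_distrib, ← Finset.sum_add_distrib]
      exact Finset.sum_congr rfl fun v' _ => by ring
    simp only [this, hw1]
    simp only [Finset.sum_add_distrib, Finset.sum_sub_distrib, ← Finset.sum_mul, ← Finset.mul_sum]
    rw [hw1]; ring
  linarith [expand ▸ key]

/-- `E_si(γ) ≥ F_si(γ) + G_si(γ)` for `γ ∈ [0,1]`. -/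
theorem stmt1 {U V : Type} [Fintype U] [Fintype V] [Nonempty U] [Nonempty V]
    (Q : U → V → ℝ) (hQ0 : ∀ u v, 0 ≤ Q u v)
    (hQ1 : ∑ u, ∑ v, Q u v = 1)
    (hm : ∀ v, 0 < ∑ u, Q u v)
    (γ : ℝ) (hγ0 : 0 ≤ γ) (hγ1 : γ ≤ 1) :
    Real.logb 2 (∑ v, (∑ u, Q u v) *
        ((∑ u, (Q u v / (∑ u', Q u' v)) ^ ((1:ℝ)/(1+γ))) ^ (1+γ))) ≥
      Real.logb 2 (∑ v, (∑ u, Q u v) *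
        ((∑ u, (Q u v / (∑ u', Q u' v)) ^ ((1:ℝ)/(1+γ))) ^ γ)) +
      Real.logb 2 (∑ v, (∑ u, Q u v) *
        (∑ u, (Q u v / (∑ u', Q u' v)) ^ ((1:ℝ)/(1+γ)))) := by
  set m : V → ℝ := fun v => ∑ u, Q u v with hmdef
  set S : V → ℝ := fun v => ∑ u, (Q u v / m v) ^ ((1:ℝ)/(1+γ)) with hSdef
  have hmw : ∑ v, m v = 1 := by rw [hmdef]; rw [← hQ1]; exact Finset.sum_comm
  have hmnn : ∀ v, 0 ≤ m v := fun v => (hm v).le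
  have hSpos : ∀ v, 0 < S v := by
    intro v
    obtain ⟨u, _, hu⟩ : ∃ u ∈ Finset.univ, 0 < Q u v := by
      by_contra hc
      push_neg at hc
      have : m v ≤ 0 := Finset.sum_nonpos fun u _ => hc u (Finset.mem_univ u)
      exact absurd (hm v) (not_lt.mpr this)
    refine Finset.sum_pos' (fun u _ => Real.rpow_nonneg (div_nonneg (hQ0 u v) (hmnn v)) _)
      ⟨u, Finset.mem_univ u, Real.rpow_pos_of_pos (div_pos hu (hm v)) _⟩
  -- key inequality: B * C ≤ A
  have hmono : ∀ v v', 0 ≤ ((S v) ^ γ - (S v') ^ γ) * (S v - S v') := by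
    intro v v'
    rcases le_total (S v') (S v) with h | h
    · exact mul_nonneg (sub_nonneg.mpr (Real.rpow_le_rpow (hSpos v').le h hγ0))
        (sub_nonneg.mpr h)
    · have h1 : (S v) ^ γ - (S v') ^ γ ≤ 0 :=
        sub_nonpos.mpr (Real.rpow_le_rpow (hSpos v).le h hγ0)
      have h2 : S v - S v' ≤ 0 := sub_nonpos.mpr h
      nlinarith
  have hkey : (∑ v, m v * (S v) ^ γ) * (∑ v, m v * S v) ≤ ∑ v, m v * ((S v) ^ γ * S v) :=
    cheb_aux m (fun v => (S v) ^ γ) S hmnn hmw hmono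
  have hA : ∑ v, m v * (S v) ^ (1 + γ) = ∑ v, m v * ((S v) ^ γ * S v) := by
    refine Finset.sum_congr rfl fun v _ => ?_
    rw [Real.rpow_add (hSpos v), Real.rpow_one]
    ring
  have hBpos : 0 < ∑ v, m v * (S v) ^ γ :=
    Finset.sum_pos (fun v _ => mul_pos (hm v) (Real.rpow_pos_of_pos (hSpos v) γ))
      Finset.univ_nonempty
  have hCpos : 0 < ∑ v, m v * S v :=
    Finset.sum_pos (fun v _ => mul_pos (hm v) (hSpos v)) Finset.univ_nonempty
  have hlog : Real.logb 2 ((∑ v, m v * (S v) ^ γ) * (∑ v, m v * S v))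
      ≤ Real.logb 2 (∑ v, m v * (S v) ^ (1 + γ)) := by
    rw [hA]
    exact Real.logb_le_logb_of_le (by norm_num) (mul_pos hBpos hCpos) hkey
  rw [Real.logb_mul hBpos.ne' hCpos.ne'] at hlog
  exact hlog
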